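/- Let u and ρ be complex numbers with |u| = 1, set σ = τ = √(ρ + conj(ρ)) (assuming ρ + conj(ρ) ≥ 0 real), and define S = [[ρ, u(1 − ρ − conj(ρ)), u²√(ρ+conj(ρ))],[conj(u), 0, 0],[0, conj(u)√(ρ+conj(ρ)), −1]]. Then S² = R₁R₂R₃, where R₁ = [[u², ρ, −u√(ρ+conj(ρ))],[0, conj(u), 0],[0, 0, conj(u)]], R₂ = [[conj(u), 0, 0],[−u·conj(ρ), u², √(ρ+conj(ρ))],[0, 0, conj(u)]], R₃ = [[conj(u), 0, 0],[0, conj(u), 0],[√(ρ+conj(ρ)), −u√(ρ+conj(ρ)), u²]]. -/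

import Mathlib

theorem stmt_6 (u ρ : ℂ) (hu : ‖u‖ = 1)
    (hρ : 0 ≤ (ρ + starRingEnd ℂ ρ).re)
    (t : ℂ) (ht : t = (Real.sqrt ((ρ + starRingEnd ℂ ρ).re) : ℂ))
    (S R₁ R₂ R₃ : Matrix (Fin 3) (Fin 3) ℂ)
    (hS : S = !![ρ, u * (1 - ρ - starRingEnd ℂ ρ), u^2 * t;
                 starRingEnd ℂ u, 0, 0;
                 0, starRingEnd ℂ u * t, -1])
    (hR₁ : R₁ = !![u^2, ρ, -u * t; 0, starRingEnd ℂ u, 0; 0, 0, starRingEnd ℂ u])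
    (hR₂ : R₂ = !![starRingEnd ℂ u, 0, 0; -u * starRingEnd ℂ ρ, u^2, t; 0, 0, starRingEnd ℂ u])
    (hR₃ : R₃ = !![starRingEnd ℂ u, 0, 0; 0, starRingEnd ℂ u, 0; t, -u * t, u^2]) :
    S^2 = R₁ * R₂ * R₃ := by
  have hu0 : u ≠ 0 := by
    intro h; rw [h] at hu; simp at hu
  have huu : starRingEnd ℂ u * u = 1 := by
    rw [← Complex.normSq_eq_conj_mul_self]
    norm_cast
    rw [← Complex.sq_norm, hu]; norm_num
  have hc : starRingEnd ℂ u = u⁻¹ := eq_inv_of_mul_eq_one_left huu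
  have hreal : ((ρ + starRingEnd ℂ ρ).re : ℂ) = ρ + starRingEnd ℂ ρ := by
    rw [Complex.ext_iff]
    constructor
    · simp
    · simp [Complex.conj_im]
  have ht2 : t ^ 2 = ρ + starRingEnd ℂ ρ := by
    rw [ht, ← Complex.ofReal_pow, Real.sq_sqrt hρ, hreal]
  subst hS hR₁ hR₂ hR₃
  rw [pow_two]
  ext i j
  fin_cases i <;> fin_cases j <;>
    simp [Matrix.mul_apply, Fin.sum_univ_succ] <;> ring_nf <;>
    simp only [ht2, hc] <;> field_simp <;> ring
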